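/- Let k ≥ 5 and 2 ≤ h ≤ k−2. If A is a set of k integers with |h^A| = h·k − h² + 1, then A is a k-term arithmetic progression. -/

import Mathlib

open Finset

/-- `A` is a `k`-term arithmetic progression of integers. -/
def IsAPFinset (A : Finset ℤ) (k : ℕ) : Prop :=
  ∃ a d : ℤ, 0 < d ∧ A = (Finset.range k).image (fun i : ℕ => a + (i : ℤ) * d)

/-- restricted sumset as a Finset: sums of h-element subsets of A -/
def RS (A : Finset ℤ) (h : ℕ) : Finset ℤ := (A.powersetCard h).image fun B => B.sum id

lemma mem_RS {A : Finset ℤ} {h : ℕ} {z : ℤ} :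
    z ∈ RS A h ↔ ∃ B, B ⊆ A ∧ B.card = h ∧ B.sum id = z := by
  simp only [RS, Finset.mem_image, Finset.mem_powersetCard]
  tauto

lemma sum_mem_RS {A B : Finset ℤ} {h : ℕ} (hBA : B ⊆ A) (hB : B.card = h) :
    B.sum id ∈ RS A h := mem_RS.2 ⟨B, hBA, hB, rfl⟩

/-- the defining set equals the finset version -/
lemma set_eq_RS (A : Finset ℤ) (h : ℕ) :
    {z : ℤ | ∃ f : Fin h → ℤ, Function.Injective f ∧ (∀ i, f i ∈ A) ∧ z = ∑ i, f i}
      = ↑(RS A h) := by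
  ext z
  simp only [Set.mem_setOf_eq, Finset.mem_coe, mem_RS]
  constructor
  · rintro ⟨f, hfinj, hfA, rfl⟩
    refine ⟨Finset.univ.image f, ?_, ?_, ?_⟩
    · intro x hx; simp only [Finset.mem_image] at hx; obtain ⟨i, _, rfl⟩ := hx; exact hfA i
    · rw [Finset.card_image_of_injective _ hfinj, Finset.card_univ, Fintype.card_fin]
    · rw [Finset.sum_image (fun a _ b _ hab => hfinj hab)]; rfl
  · rintro ⟨B, hBA, hB, rfl⟩
    have e : Fin h ≃ {x // x ∈ B} := (B.equivFin.trans (Equiv.cast (by rw [hB]))).symm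
    refine ⟨fun i => (e i : ℤ), ?_, ?_, ?_⟩
    · intro i j hij
      exact e.injective (Subtype.ext hij)
    · intro i; exact hBA (e i).2
    · rw [← Finset.sum_attach B id]
      exact (Equiv.sum_comp e (fun x => (id (x : ℤ)))).symm

/-- uniqueness of sorted enumerations -/
lemma sorted_unique {m : ℕ} {a b : ℕ → ℤ} (ha : StrictMonoOn a (Set.Iio m))
    (hb : StrictMonoOn b (Set.Iio m))
    (hab : (Finset.range m).image a = (Finset.range m).image b) :
    ∀ n < m, a n = b n := by
  have key : ∀ (f : ℕ → ℤ), StrictMonoOn f (Set.Iio m) →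
      ((List.range m).map f).Pairwise (· < ·) := by
    intro f hf
    rw [List.pairwise_map]
    refine List.Pairwise.imp_of_mem ?_ List.pairwise_lt_range
    intro x y hx hy hxy
    exact hf (by simpa using List.mem_range.1 hx) (by simpa using List.mem_range.1 hy) hxy
  have pa := key a ha
  have pb := key b hb
  have na : ((List.range m).map a).Nodup := pa.imp (fun h => ne_of_lt h)
  have nb : ((List.range m).map b).Nodup := pb.imp (fun h => ne_of_lt h)
  have tf : ((List.range m).map a).toFinset = ((List.range m).map b).toFinset := by
    have h1 : ∀ (f : ℕ → ℤ), ((List.range m).map f).toFinset = (Finset.range m).image f := by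
      intro f; ext x
      simp [List.mem_toFinset, List.mem_map, Finset.mem_image, List.mem_range, Finset.mem_range]
    rw [h1, h1, hab]
  have hperm := List.perm_of_nodup_nodup_toFinset_eq na nb tf
  have heq := List.Perm.eq_of_pairwise (fun _ _ _ _ h1 h2 => absurd (lt_trans h1 h2) (lt_irrefl _)) pa pb hperm
  intro n hn
  have hlen : n < ((List.range m).map a).length := by simpa using hn
  have h1 := List.getElem_of_eq heq hlen
  simpa using h1

section Idx
variable {k : ℕ} {a : ℕ → ℤ}

lemma a_injOn (ha : StrictMonoOn a (Set.Iio k)) : Set.InjOn a ↑(Finset.range k) := by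
  rw [Finset.coe_range]; exact ha.injOn

lemma sum_image_id {I : Finset ℕ} (hinj : Set.InjOn a ↑I) :
    (I.image a).sum id = ∑ i ∈ I, a i :=
  Finset.sum_image (fun x hx y hy hxy => hinj (by exact_mod_cast hx) (by exact_mod_cast hy) hxy)

lemma sum_index_mem_RS (ha : StrictMonoOn a (Set.Iio k)) {I : Finset ℕ}
    (hI : I ⊆ Finset.range k) :
    (∑ i ∈ I, a i) ∈ RS ((Finset.range k).image a) I.card := by
  have hinj : Set.InjOn a ↑I := (a_injOn ha).mono (by exact_mod_cast hI)
  refine mem_RS.2 ⟨I.image a, Finset.image_subset_image hI, Finset.card_image_of_injOn hinj, ?_⟩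
  exact sum_image_id hinj

lemma minsum_index (ha : StrictMonoOn a (Set.Iio k)) {I : Finset ℕ} {m : ℕ}
    (hI : I ⊆ Finset.range k) (hIm : I.card = m) :
    ∑ i ∈ Finset.range m, a i ≤ ∑ i ∈ I, a i := by
  induction m generalizing I with
  | zero => simp [Finset.card_eq_zero.1 hIm]
  | succ m ih =>
    have hne : I.Nonempty := Finset.card_pos.1 (by omega)
    set M := I.max' hne with hM
    have hMI : M ∈ I := I.max'_mem hne
    have hMk : M < k := Finset.mem_range.1 (hI hMI)
    have hsub : I ⊆ Finset.range (M + 1) := by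
      intro x hx; exact Finset.mem_range.2 (Nat.lt_succ_of_le (I.le_max' x hx))
    have hmM : m ≤ M := by
      have := Finset.card_le_card hsub
      rw [hIm, Finset.card_range] at this; omega
    have ihe := ih (I := I.erase M) ((Finset.erase_subset _ _).trans hI)
      (by rw [Finset.card_erase_of_mem hMI, hIm]; rfl)
    have ham : a m ≤ a M := ha.monotoneOn (Set.mem_Iio.2 (by omega)) (Set.mem_Iio.2 hMk) hmM
    calc ∑ i ∈ Finset.range (m+1), a i = ∑ i ∈ Finset.range m, a i + a m := Finset.sum_range_succ a m
    _ ≤ ∑ i ∈ I.erase M, a i + a M := add_le_add ihe ham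
    _ = ∑ i ∈ I, a i := Finset.sum_erase_add I a hMI

lemma minsum (ha : StrictMonoOn a (Set.Iio k)) {m : ℕ} {s : ℤ}
    (hs : s ∈ RS ((Finset.range k).image a) m) :
    ∑ i ∈ Finset.range m, a i ≤ s := by
  obtain ⟨C, hCA, hCm, rfl⟩ := mem_RS.1 hs
  obtain ⟨I, hIk, rfl⟩ := Finset.subset_image_iff.1 hCA
  have hinj : Set.InjOn a ↑I := (a_injOn ha).mono (by exact_mod_cast hIk)
  rw [Finset.card_image_of_injOn hinj] at hCm
  rw [sum_image_id hinj]
  exact minsum_index ha hIk hCm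

end Idx

lemma L2 {k h : ℕ} {a : ℕ → ℤ} (ha : StrictMonoOn a (Set.Iio k)) (hh : 1 ≤ h) (hhk : h ≤ k) :
    (RS ((Finset.range (k-1)).image a) (h-1)).card + (k - h)
      ≤ (RS ((Finset.range k).image a) h).card := by
  have hk1 : 1 ≤ k := le_trans hh hhk
  set B := (Finset.range (k-1)).image a with hB
  set A := (Finset.range k).image a with hA
  have ha' : StrictMonoOn a (Set.Iio (k-1)) := ha.mono (Set.Iio_subset_Iio (by omega))
  set P := ∑ i ∈ Finset.range (h-1), a i with hP
  set E := (Finset.Ico (h-1) (k-1)).image (fun j => P + a j) with hE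
  set D := (RS B (h-1)).image (fun s => s + a (k-1)) with hD
  have hknotB : a (k-1) ∉ B := by
    rw [hB]; intro hmem
    obtain ⟨n, hn, hna⟩ := Finset.mem_image.1 hmem
    rw [Finset.mem_range] at hn
    exact absurd hna (ne_of_lt (ha (Set.mem_Iio.2 (by omega)) (Set.mem_Iio.2 (by omega)) (by omega)))
  have hBA : B ⊆ A := Finset.image_subset_image (by intro x hx; rw [Finset.mem_range] at *; omega)
  have hEsub : E ⊆ RS A h := by
    intro e he
    obtain ⟨j, hj, rfl⟩ := Finset.mem_image.1 he
    rw [Finset.mem_Ico] at hj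
    have hjnot : j ∉ Finset.range (h-1) := by rw [Finset.mem_range]; omega
    have hIsub : insert j (Finset.range (h-1)) ⊆ Finset.range k := by
      intro x hx
      rcases Finset.mem_insert.1 hx with rfl | hx
      · rw [Finset.mem_range]; omega
      · rw [Finset.mem_range] at *; omega
    have hcard : (insert j (Finset.range (h-1))).card = h := by
      rw [Finset.card_insert_of_notMem hjnot, Finset.card_range]; omega
    have := sum_index_mem_RS ha hIsub
    rw [hcard, Finset.sum_insert hjnot] at this
    rw [add_comm (a j) P] at this
    exact this
  have hDsub : D ⊆ RS A h := by
    intro d hd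
    obtain ⟨s, hs, rfl⟩ := Finset.mem_image.1 hd
    obtain ⟨C, hCB, hCc, rfl⟩ := mem_RS.1 hs
    have hknotC : a (k-1) ∉ C := fun hc => hknotB (hCB hc)
    refine mem_RS.2 ⟨insert (a (k-1)) C, ?_, ?_, ?_⟩
    · intro x hx
      rcases Finset.mem_insert.1 hx with rfl | hx
      · exact Finset.mem_image.2 ⟨k-1, Finset.mem_range.2 (by omega), rfl⟩
      · exact hBA (hCB hx)
    · rw [Finset.card_insert_of_notMem hknotC, hCc]; omega
    · rw [Finset.sum_insert hknotC]; simp [add_comm]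
  have hlt : ∀ e ∈ E, ∀ d ∈ D, e < d := by
    intro e he d hd
    obtain ⟨j, hj, rfl⟩ := Finset.mem_image.1 he
    obtain ⟨s, hs, rfl⟩ := Finset.mem_image.1 hd
    rw [Finset.mem_Ico] at hj
    have h1 : a j < a (k-1) := ha (Set.mem_Iio.2 (by omega)) (Set.mem_Iio.2 (by omega)) (by omega)
    have h2 : P ≤ s := minsum ha' hs
    omega
  have hdisj : Disjoint E D := by
    rw [Finset.disjoint_left]
    intro x hxE hxD
    exact absurd rfl (ne_of_lt (hlt x hxE x hxD))
  have hEcard : E.card = k - h := by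
    rw [hE, Finset.card_image_of_injOn, Nat.card_Ico]
    · omega
    · intro x hx y hy hxy
      rw [Finset.coe_Ico, Set.mem_Ico] at hx hy
      have := add_left_cancel hxy
      exact (a_injOn ha) (by simp [Finset.mem_range]; omega) (by simp [Finset.mem_range]; omega) this
  have hDcard : D.card = (RS B (h-1)).card :=
    Finset.card_image_of_injective _ (add_left_injective _)
  calc (RS B (h-1)).card + (k-h) = D.card + E.card := by rw [hDcard, hEcard]
  _ = (E ∪ D).card := by rw [Finset.card_union_of_disjoint hdisj, add_comm]
  _ ≤ (RS A h).card := Finset.card_le_card (Finset.union_subset hEsub hDsub)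

lemma L1 : ∀ (h k : ℕ) (a : ℕ → ℤ), StrictMonoOn a (Set.Iio k) → h ≤ k →
    h * (k - h) + 1 ≤ (RS ((Finset.range k).image a) h).card := by
  intro h
  induction h with
  | zero =>
    intro k a ha hk
    have : RS ((Finset.range k).image a) 0 = {0} := by
      rw [RS, Finset.powersetCard_zero]
      simp
    rw [this]; simp
  | succ h ih =>
    intro k a ha hk
    have ha' : StrictMonoOn a (Set.Iio (k-1)) := ha.mono (Set.Iio_subset_Iio (by omega))
    have hih := ih (k-1) a ha' (by omega)
    have hl2 := L2 (k := k) (h := h+1) (a := a) ha (by omega) hk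
    simp only [Nat.add_sub_cancel] at hl2
    obtain ⟨x, rfl⟩ : ∃ x, k = h + 1 + x := ⟨k - (h+1), by omega⟩
    have e1 : h + 1 + x - 1 - h = x := by omega
    have e2 : h + 1 + x - (h + 1) = x := by omega
    rw [e1] at hih
    rw [e2] at hl2 ⊢
    have e3 : (h+1) * x = h * x + x := by ring
    omega

lemma neg_mem_RS_neg {A : Finset ℤ} {h : ℕ} {s : ℤ} (hs : s ∈ RS A h) :
    -s ∈ RS (A.image (fun x => -x)) h := by
  obtain ⟨C, hCA, hCc, rfl⟩ := mem_RS.1 hs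
  refine mem_RS.2 ⟨C.image (fun x => -x), Finset.image_subset_image hCA, ?_, ?_⟩
  · rw [Finset.card_image_of_injective _ neg_injective]; exact hCc
  · rw [Finset.sum_image (fun x _ y _ hxy => neg_injective hxy)]
    exact Finset.sum_neg_distrib id

lemma RS_neg_eq (A : Finset ℤ) (h : ℕ) :
    RS (A.image (fun x => -x)) h = (RS A h).image (fun x => -x) := by
  have hinv : (A.image (fun x : ℤ => -x)).image (fun x => -x) = A := by
    rw [Finset.image_image]; simp
  ext z
  constructor
  · intro hz
    have h2 := neg_mem_RS_neg hz
    rw [hinv] at h2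
    exact Finset.mem_image.2 ⟨-z, h2, neg_neg z⟩
  · intro hz
    obtain ⟨s, hs, rfl⟩ := Finset.mem_image.1 hz
    exact neg_mem_RS_neg hs

lemma RS_neg_card (A : Finset ℤ) (h : ℕ) :
    (RS (A.image (fun x => -x)) h).card = (RS A h).card := by
  rw [RS_neg_eq]
  exact Finset.card_image_of_injective _ neg_injective

lemma RS_compl {A : Finset ℤ} {k h : ℕ} (hA : A.card = k) (hhk : h ≤ k) :
    RS A (k - h) = (RS A h).image (fun s => A.sum id - s) := by
  ext z
  constructor
  · intro hz
    obtain ⟨C, hCA, hCc, rfl⟩ := mem_RS.1 hz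
    refine Finset.mem_image.2 ⟨(A \ C).sum id, mem_RS.2 ⟨A \ C, Finset.sdiff_subset, ?_, rfl⟩, ?_⟩
    · rw [Finset.card_sdiff_of_subset hCA, hA, hCc]; omega
    · rw [Finset.sum_sdiff_eq_sub hCA]; ring
  · intro hz
    obtain ⟨s, hs, rfl⟩ := Finset.mem_image.1 hz
    obtain ⟨D, hDA, hDc, rfl⟩ := mem_RS.1 hs
    refine mem_RS.2 ⟨A \ D, Finset.sdiff_subset, ?_, ?_⟩
    · rw [Finset.card_sdiff_of_subset hDA, hA, hDc]
    · rw [Finset.sum_sdiff_eq_sub hDA]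

lemma RS_compl_card {A : Finset ℤ} {k h : ℕ} (hA : A.card = k) (hhk : h ≤ k) :
    (RS A (k - h)).card = (RS A h).card := by
  rw [RS_compl hA hhk]
  exact Finset.card_image_of_injective _ sub_right_injective

lemma card_image_range {k : ℕ} {a : ℕ → ℤ} (ha : StrictMonoOn a (Set.Iio k)) :
    ((Finset.range k).image a).card = k := by
  rw [Finset.card_image_of_injOn (a_injOn ha), Finset.card_range]

lemma base2 {k : ℕ} {a : ℕ → ℤ} (ha : StrictMonoOn a (Set.Iio k)) (hk5 : 5 ≤ k)
    (hcard : (RS ((Finset.range k).image a) 2).card = 2 * (k - 2) + 1) :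
    ∀ j, 2 ≤ j → j ≤ k - 2 → a (j+1) - a j = a 1 - a 0 := by
  set A := (Finset.range k).image a with hA
  set cc : ℕ → ℤ := fun m => if m ≤ k - 2 then a 0 + a (m+1) else a (m - (k-2)) + a (k-1)
    with hcc
  have amono : ∀ i j : ℕ, i < j → j < k → a i < a j := fun i j hij hj =>
    ha (Set.mem_Iio.2 (by omega)) (Set.mem_Iio.2 hj) hij
  have adj : ∀ m, m + 1 ≤ 2*(k-2) → cc m < cc (m+1) := by
    intro m hm
    by_cases h1 : m + 1 ≤ k - 2
    · rw [hcc]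
      simp only [if_pos (by omega : m ≤ k-2), if_pos h1]
      have := amono (m+1) (m+1+1) (by omega) (by omega)
      omega
    · by_cases h2 : m ≤ k - 2
      · -- m = k-2
        rw [hcc]
        simp only [if_pos h2, if_neg h1]
        have hidx : m + 1 - (k-2) = 1 := by omega
        rw [hidx]
        have hm1 : m + 1 = k - 1 := by omega
        have := amono 0 1 (by omega) (by omega)
        rw [hm1]
        omega
      · rw [hcc]
        simp only [if_neg h1, if_neg h2]
        have := amono (m - (k-2)) (m+1 - (k-2)) (by omega) (by omega)
        omega
  have mono : ∀ n, n ≤ 2*(k-2) → ∀ m, m < n → cc m < cc n := by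
    intro n
    induction n with
    | zero => omega
    | succ n ih =>
      intro hn m hm
      rcases Nat.lt_succ_iff_lt_or_eq.1 hm with hm' | rfl
      · exact lt_trans (ih (by omega) m hm') (adj n (by omega))
      · exact adj m (by omega)
  have ccmem : ∀ m, m ≤ 2*(k-2) → cc m ∈ RS A 2 := by
    intro m hm
    by_cases h1 : m ≤ k - 2
    · have hne : (0:ℕ) ∉ ({m+1} : Finset ℕ) := by simp
      have hsub : insert 0 ({m+1} : Finset ℕ) ⊆ Finset.range k := by
        intro x hx; simp at hx; rcases hx with rfl | rfl <;> (rw [Finset.mem_range]; omega)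
      have := sum_index_mem_RS ha hsub
      rw [Finset.card_insert_of_notMem hne, Finset.card_singleton,
        Finset.sum_insert hne, Finset.sum_singleton] at this
      rw [hcc]; simp only [if_pos h1]; exact this
    · have hne : (m - (k-2)) ∉ ({k-1} : Finset ℕ) := by simp; omega
      have hsub : insert (m - (k-2)) ({k-1} : Finset ℕ) ⊆ Finset.range k := by
        intro x hx; simp at hx; rcases hx with rfl | rfl <;> (rw [Finset.mem_range]; omega)
      have := sum_index_mem_RS ha hsub
      rw [Finset.card_insert_of_notMem hne, Finset.card_singleton,
        Finset.sum_insert hne, Finset.sum_singleton] at this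
      rw [hcc]; simp only [if_neg h1]; exact this
  have himg : (Finset.range (2*(k-2)+1)).image cc = RS A 2 := by
    refine Finset.eq_of_subset_of_card_le ?_ ?_
    · intro x hx
      obtain ⟨m, hm, rfl⟩ := Finset.mem_image.1 hx
      exact ccmem m (by rw [Finset.mem_range] at hm; omega)
    · rw [hcard, Finset.card_image_of_injOn]
      · rw [Finset.card_range]
      · intro x hx y hy hxy
        rw [Finset.coe_range, Set.mem_Iio] at hx hy
        by_contra hne
        rcases Nat.lt_or_ge x y with h | h
        · exact absurd hxy (ne_of_lt (mono y (by omega) x h))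
        · exact absurd hxy.symm (ne_of_lt (mono x (by omega) y (by omega)))
  have surj : ∀ s ∈ RS A 2, ∃ m, m ≤ 2*(k-2) ∧ cc m = s := by
    intro s hs
    rw [← himg] at hs
    obtain ⟨m, hm, rfl⟩ := Finset.mem_image.1 hs
    exact ⟨m, by rw [Finset.mem_range] at hm; omega, rfl⟩
  have key : ∀ j, 2 ≤ j → j ≤ k - 2 → ∃ p, j+1 ≤ p ∧ p ≤ k-1 ∧ a 1 + a j = a 0 + a p := by
    intro j hj2 hjk
    have hmem : a 1 + a j ∈ RS A 2 := by
      have hne : (1:ℕ) ∉ ({j} : Finset ℕ) := by simp; omega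
      have hsub : insert 1 ({j} : Finset ℕ) ⊆ Finset.range k := by
        intro x hx; simp at hx; rcases hx with rfl | rfl <;> (rw [Finset.mem_range]; omega)
      have := sum_index_mem_RS ha hsub
      rwa [Finset.card_insert_of_notMem hne, Finset.card_singleton,
        Finset.sum_insert hne, Finset.sum_singleton] at this
    obtain ⟨m, hm, hcm⟩ := surj _ hmem
    have hup : cc (k-1) = a 1 + a (k-1) := by
      rw [hcc]; simp only [if_neg (by omega : ¬ (k-1 ≤ k-2))]
      congr 2
      omega
    have hmlt : m < k - 1 := by
      by_contra hge
      have h1 : cc m < cc (k-1) := by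
        rw [hcm, hup]
        have := amono j (k-1) (by omega) (by omega)
        omega
      rcases Nat.eq_or_lt_of_le (by omega : k - 1 ≤ m) with rfl | hlt
      · exact absurd h1 (lt_irrefl _)
      · exact absurd (mono m (by omega) (k-1) hlt) (by omega)
    have hlow : cc (j-1) = a 0 + a j := by
      rw [hcc]; simp only [if_pos (by omega : j - 1 ≤ k-2)]
      congr 2
      omega
    have hmgt : j - 1 < m := by
      by_contra hle
      have h1 : cc (j-1) < cc m := by
        rw [hcm, hlow]
        have := amono 0 1 (by omega) (by omega)
        omega
      rcases Nat.eq_or_lt_of_le (by omega : m ≤ j - 1) with rfl | hlt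
      · exact absurd h1 (lt_irrefl _)
      · exact absurd (mono (j-1) (by omega) m hlt) (by omega)
    refine ⟨m+1, by omega, by omega, ?_⟩
    rw [← hcm, hcc]
    simp only [if_pos (by omega : m ≤ k - 2)]
  have pin : ∀ t j, 2 ≤ j → j ≤ k - 2 → k - 2 - j = t → a 1 + a j = a 0 + a (j+1) := by
    intro t
    induction t with
    | zero =>
      intro j hj2 hjk ht
      obtain ⟨p, hp1, hp2, hp3⟩ := key j hj2 hjk
      have : p = j + 1 := by omega
      rw [← this]; exact hp3
    | succ t ih =>
      intro j hj2 hjk ht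
      have hih := ih (j+1) (by omega) (by omega) (by omega)
      obtain ⟨p, hp1, hp2, hp3⟩ := key j hj2 hjk
      have hlt : a p < a (j+1+1) := by
        have h1 : a 1 + a j < a 1 + a (j+1) := by
          have := amono j (j+1) (by omega) (by omega); omega
        rw [hp3] at h1
        rw [hih] at h1
        omega
      have hple : p < j + 2 := by
        by_contra hge
        have := ha.monotoneOn (Set.mem_Iio.2 (by omega : j+1+1 < k))
          (Set.mem_Iio.2 (by omega : p < k)) (by omega : j + 1 + 1 ≤ p)
        omega
      have : p = j + 1 := by omega
      rw [← this]; exact hp3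
  intro j hj2 hjk
  have := pin (k-2-j) j hj2 hjk rfl
  omega

lemma AP_of_diffs {k : ℕ} {a : ℕ → ℤ} (ha : StrictMonoOn a (Set.Iio k)) (hk : 2 ≤ k)
    (hd : ∀ j, j + 1 < k → a (j+1) - a j = a 1 - a 0) :
    IsAPFinset ((Finset.range k).image a) k := by
  have hpos : 0 < a 1 - a 0 := by
    have := ha (Set.mem_Iio.2 (by omega : (0:ℕ) < k)) (Set.mem_Iio.2 (by omega : (1:ℕ) < k))
      (by omega)
    omega
  have lin : ∀ j, j < k → a j = a 0 + (j:ℤ) * (a 1 - a 0) := by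
    intro j
    induction j with
    | zero => intro _; push_cast; ring
    | succ j ih =>
      intro hj
      have h1 := hd j hj
      have h2 := ih (by omega)
      push_cast
      push_cast at h2
      linarith [h1, h2]
  refine ⟨a 0, a 1 - a 0, hpos, ?_⟩
  apply Finset.image_congr
  intro x hx
  rw [Finset.coe_range, Set.mem_Iio] at hx
  exact lin x hx

lemma diffs_of_AP {m : ℕ} {a : ℕ → ℤ} (ha : StrictMonoOn a (Set.Iio m))
    (hAP : IsAPFinset ((Finset.range m).image a) m) :
    ∀ j, j + 1 < m → a (j+1) - a j = a 1 - a 0 := by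
  obtain ⟨α, d, hd, heq⟩ := hAP
  have hg : StrictMonoOn (fun i : ℕ => α + (i:ℤ) * d) (Set.Iio m) := by
    intro x _ y _ hxy
    dsimp only
    have hc : (x:ℤ) < (y:ℤ) := by exact_mod_cast hxy
    nlinarith
  have hu := sorted_unique ha hg heq
  intro j hj
  rw [hu (j+1) hj, hu j (by omega), hu 1 (by omega), hu 0 (by omega)]
  push_cast
  ring

lemma neg_enum_mono {k : ℕ} {a : ℕ → ℤ} (ha : StrictMonoOn a (Set.Iio k)) (hk : 1 ≤ k) :
    StrictMonoOn (fun n => -a (k-1-n)) (Set.Iio k) := by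
  intro x hx y hy hxy
  rw [Set.mem_Iio] at hx hy
  dsimp only
  have : a (k-1-y) < a (k-1-x) :=
    ha (Set.mem_Iio.2 (by omega)) (Set.mem_Iio.2 (by omega)) (by omega)
  omega

lemma neg_enum_eq {k : ℕ} (a : ℕ → ℤ) (hk : 1 ≤ k) :
    (Finset.range k).image (fun n => -a (k-1-n))
      = ((Finset.range k).image a).image (fun x => -x) := by
  rw [Finset.image_image]
  ext z
  simp only [Finset.mem_image, Finset.mem_range, Function.comp_apply]
  constructor
  · rintro ⟨n, hn, rfl⟩
    exact ⟨k-1-n, by omega, rfl⟩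
  · rintro ⟨n, hn, rfl⟩
    refine ⟨k-1-n, by omega, ?_⟩
    have : k-1-(k-1-n) = n := by omega
    rw [this]

lemma AP_of_neg {X : Finset ℤ} {m : ℕ} (h : IsAPFinset (X.image (fun x => -x)) m) :
    IsAPFinset X m := by
  obtain ⟨α, d, hd, heq⟩ := h
  have hX : X = ((X.image (fun x : ℤ => -x)).image (fun x => -x)) := by
    rw [Finset.image_image]; simp
  rw [heq, Finset.image_image] at hX
  refine ⟨-α - ((m:ℤ)-1) * d, d, hd, ?_⟩
  rw [hX]
  ext z
  simp only [Finset.mem_image, Finset.mem_range, Function.comp_apply]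
  constructor
  · rintro ⟨n, hn, rfl⟩
    refine ⟨m-1-n, by omega, ?_⟩
    have hc : ((m-1-n : ℕ) : ℤ) = (m:ℤ) - 1 - n := by
      have h1 : (1:ℕ) ≤ m := by omega
      push_cast [Nat.cast_sub (by omega : n ≤ m - 1), Nat.cast_sub h1]
      ring
    rw [hc]; ring
  · rintro ⟨n, hn, rfl⟩
    refine ⟨m-1-n, by omega, ?_⟩
    have hc : ((m-1-n : ℕ) : ℤ) = (m:ℤ) - 1 - n := by
      have h1 : (1:ℕ) ≤ m := by omega
      push_cast [Nat.cast_sub (by omega : n ≤ m - 1), Nat.cast_sub h1]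
      ring
    rw [hc]; ring

lemma main_lemma : ∀ h k (a : ℕ → ℤ), StrictMonoOn a (Set.Iio k) → 5 ≤ k → 2 ≤ h → h ≤ k - 2 →
    (RS ((Finset.range k).image a) h).card = h * (k - h) + 1 →
    IsAPFinset ((Finset.range k).image a) k := by
  intro h
  induction h using Nat.strong_induction_on with
  | _ h ih =>
  intro k a ha hk5 hh2 hhk hcard
  set b : ℕ → ℤ := fun n => -a (k-1-n) with hb
  have hb_mono : StrictMonoOn b (Set.Iio k) := neg_enum_mono ha (by omega)
  have hb_eq : (Finset.range k).image b = ((Finset.range k).image a).image (fun x => -x) :=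
    neg_enum_eq a (by omega)
  rcases eq_or_lt_of_le hh2 with h2 | h3
  · -- h = 2
    obtain rfl : h = 2 := h2.symm
    have hkh : k - 2 = k - 2 := rfl
    have d1 := base2 ha hk5 hcard
    have hcard' : (RS ((Finset.range k).image b) 2).card = 2*(k-2)+1 := by
      rw [hb_eq, RS_neg_card]; exact hcard
    have d2 := base2 hb_mono hk5 hcard'
    apply AP_of_diffs ha (by omega)
    intro j hj
    have hlink : a (k-1) - a (k-2) = a 1 - a 0 := by
      have h1 := d1 (k-2) (by omega) (le_refl _)
      have e : k-2+1 = k-1 := by omega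
      rw [e] at h1; exact h1
    by_cases hcase : 2 ≤ j ∧ j ≤ k-2
    · exact d1 j hcase.1 hcase.2
    · have hj1 : j ≤ 1 := by omega
      have h2' := d2 (k-2-j) (by omega) (by omega)
      simp only [hb] at h2'
      have e1 : k-1-(k-2-j+1) = j := by omega
      have e2 : k-1-(k-2-j) = j+1 := by omega
      have e3 : k-1-1 = k-2 := by omega
      have e4 : k-1-0 = k-1 := by omega
      rw [e1, e2, e3, e4] at h2'
      linarith [hlink, h2']
  · -- 3 ≤ h
    rcases eq_or_lt_of_le hhk with hq | hlt
    · -- h = k-2 : complement to the case h' = 2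
      have hAcard : ((Finset.range k).image a).card = k := card_image_range ha
      have hcompl := RS_compl_card (k := k) (h := h) hAcard (by omega)
      have hkh : k - h = 2 := by omega
      rw [hkh] at hcompl
      have hc2 : (RS ((Finset.range k).image a) 2).card = 2*(k-2)+1 := by
        rw [hcompl, hcard, hkh, hq, Nat.mul_comm]
      exact ih 2 (by omega) k a ha hk5 (le_refl 2) (by omega) hc2
    · -- 3 ≤ h < k-2
      have hk6 : 6 ≤ k := by omega
      have ha' : StrictMonoOn a (Set.Iio (k-1)) := ha.mono (Set.Iio_subset_Iio (by omega))
      have hb' : StrictMonoOn b (Set.Iio (k-1)) := hb_mono.mono (Set.Iio_subset_Iio (by omega))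
      have force : ∀ (c : ℕ → ℤ), StrictMonoOn c (Set.Iio k) →
          (RS ((Finset.range k).image c) h).card = h*(k-h)+1 →
          (RS ((Finset.range (k-1)).image c) (h-1)).card = (h-1)*((k-1)-(h-1))+1 := by
        intro c hc hcc
        have hl2 := L2 (k := k) (h := h) hc (by omega) (by omega)
        have hl1 := L1 (h-1) (k-1) c (hc.mono (Set.Iio_subset_Iio (by omega))) (by omega)
        rw [hcc] at hl2
        have e1 : (k-1)-(h-1) = k-h := by omega
        rw [e1] at hl1 ⊢
        obtain ⟨v, hv⟩ : ∃ v, h = v + 1 := ⟨h-1, by omega⟩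
        subst hv
        simp only [Nat.add_sub_cancel] at hl1 hl2 ⊢
        have e3 : (v+1) * (k-(v+1)) = v * (k-(v+1)) + (k-(v+1)) := by ring
        omega
      have hA1 := force a ha hcard
      have hAP1 := ih (h-1) (by omega) (k-1) a ha' (by omega) (by omega) (by omega) hA1
      have hcardb : (RS ((Finset.range k).image b) h).card = h*(k-h)+1 := by
        rw [hb_eq, RS_neg_card]; exact hcard
      have hA2 := force b hb_mono hcardb
      have hAP2 := ih (h-1) (by omega) (k-1) b hb' (by omega) (by omega) (by omega) hA2
      have dA := diffs_of_AP ha' hAP1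
      have dB := diffs_of_AP hb' hAP2
      apply AP_of_diffs ha (by omega)
      intro j hj
      have hlink : a 1 - a 0 = a (k-1) - a (k-2) := by
        have h1 := dA 1 (by omega)
        have h2 := dB (k-3) (by omega)
        simp only [hb] at h2
        have e1 : k-1-(k-3+1) = 1 := by omega
        have e2 : k-1-(k-3) = 2 := by omega
        have e3 : k-1-1 = k-2 := by omega
        have e4 : k-1-0 = k-1 := by omega
        rw [e1, e2, e3, e4] at h2
        linarith [h1, h2]
      by_cases hcase : j + 1 < k - 1
      · exact dA j hcase
      · have hj2 : j = k-2 := by omega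
        subst hj2
        have e : k-2+1 = k-1 := by omega
        rw [e]
        exact hlink.symm

lemma exists_sorted (A : Finset ℤ) :
    ∃ a : ℕ → ℤ, StrictMonoOn a (Set.Iio A.card) ∧ A = (Finset.range A.card).image a := by
  classical
  set k := A.card with hk
  have f := A.orderIsoOfFin hk.symm
  refine ⟨fun n => if hn : n < k then (f ⟨n, hn⟩ : ℤ) else 0, ?_, ?_⟩
  · intro x hx y hy hxy
    rw [Set.mem_Iio] at hx hy
    simp only [dif_pos hx, dif_pos hy]
    have : (⟨x, hx⟩ : Fin k) < ⟨y, hy⟩ := by exact_mod_cast hxy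
    exact_mod_cast f.strictMono this
  · ext z
    simp only [Finset.mem_image, Finset.mem_range]
    constructor
    · intro hz
      obtain ⟨i, hi⟩ := f.surjective ⟨z, hz⟩
      refine ⟨i, i.2, ?_⟩
      simp only [dif_pos i.2]
      rw [show (⟨(i:ℕ), i.2⟩ : Fin k) = i from Fin.ext rfl, hi]
    · rintro ⟨n, hn, rfl⟩
      simp only [dif_pos hn]
      exact (f ⟨n, hn⟩).2

theorem restricted_sumset_eq_implies_AP (A : Finset ℤ) (k h : ℕ) (hk : A.card = k)
    (hk5 : 5 ≤ k) (hh2 : 2 ≤ h) (hhk : h ≤ k - 2)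
    (hcard : ({z : ℤ | ∃ f : Fin h → ℤ, Function.Injective f ∧ (∀ i, f i ∈ A) ∧
        z = ∑ i, f i}.ncard : ℤ) = (h : ℤ) * k - (h : ℤ) ^ 2 + 1) :
    IsAPFinset A k := by
  obtain ⟨a, ha, hA⟩ := exists_sorted A
  rw [hk] at ha hA
  rw [set_eq_RS A h, Set.ncard_coe_finset] at hcard
  have hhk' : h ≤ k := by omega
  have hNat : (RS A h).card = h * (k - h) + 1 := by
    have hcast : ((h * (k - h) + 1 : ℕ) : ℤ) = (h:ℤ) * k - (h:ℤ)^2 + 1 := by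
      push_cast [Nat.cast_sub hhk']
      ring
    have := hcard.trans hcast.symm
    exact_mod_cast this
  rw [hA] at hNat ⊢
  exact main_lemma h k a ha hk5 hh2 hhk hNat
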